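/- For every positive integer n, there is no pure-state commutator bilocal quantum model in M_n(ℂ) realising the shared random bit distribution. That is, there do not exist Hermitian idempotents ρ, σ ∈ M_n(ℂ) with ρσ = σρ and Tr(ρσ) = 1, together with PVMs (A_a)_{a∈{0,1}}, (B_b)_{b∈{0,1}}, (C_c)__{c∈{0,1}} in M_n(ℂ) such that every A_a commutes with every B_b and every C_c, every B_b commutes with every C_c, A_a σ = σ A_a and ρ C_c = C_c ρ for all a, c, and Tr(ρσ · A_a · B_b · C_c) = 1/2 if a = b = c and 0 otherwise. -/

import Mathlib

open Matrix

lemma myVecMulVec_mul {n : ℕ} (v w : Fin n → ℂ) (X : Matrix (Fin n) (Fin n) ℂ) :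
    vecMulVec v w * X = vecMulVec v (w ᵥ* X) := by
  ext i j
  simp [mul_apply, vecMulVec_apply, vecMul, dotProduct, Finset.mul_sum, mul_assoc]

lemma myTrace_vecMulVec {n : ℕ} (v w : Fin n → ℂ) :
    (vecMulVec v w).trace = w ⬝ᵥ v := by
  simp [trace, diag, vecMulVec_apply, dotProduct, mul_comm]

lemma myVecMulVec_mul_vecMulVec {n : ℕ} (a b c d : Fin n → ℂ) :
    vecMulVec a b * vecMulVec c d = (b ⬝ᵥ c) • vecMulVec a d := by
  ext i j
  simp only [mul_apply, vecMulVec_apply, Matrix.smul_apply, dotProduct, Finset.sum_mul, smul_eq_mul]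
  apply Finset.sum_congr rfl
  intro k _
  ring

lemma rank_one_of_proj_trace_one {n : ℕ} {τ : Matrix (Fin n) (Fin n) ℂ}
    (hherm : τᴴ = τ) (hidem : τ * τ = τ) (htr : τ.trace = 1) :
    ∃ v : Fin n → ℂ, τ = vecMulVec v (star v) := by
  have hτ : τ.IsHermitian := hherm
  have hspec := hτ.spectral_theorem
  rw [Unitary.conjStarAlgAut_apply] at hspec
  have hdiag : star (hτ.eigenvectorUnitary : Matrix (Fin n) (Fin n) ℂ) * τ *
      (hτ.eigenvectorUnitary : Matrix (Fin n) (Fin n) ℂ) = diagonal (RCLike.ofReal ∘ hτ.eigenvalues) := by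
    have h := congrArg (fun X => star (hτ.eigenvectorUnitary : Matrix (Fin n) (Fin n) ℂ) * X *
      (hτ.eigenvectorUnitary : Matrix (Fin n) (Fin n) ℂ)) hspec
    rw [h]
    simp only [← mul_assoc, Unitary.coe_star_mul_self, one_mul]
    rw [mul_assoc, Unitary.coe_star_mul_self, mul_one]
  set U := (hτ.eigenvectorUnitary : Matrix (Fin n) (Fin n) ℂ) with hU
  have hUU : star U * U = 1 := Unitary.coe_star_mul_self _
  have hUU' : U * star U = 1 := Unitary.coe_mul_star_self _
  set f : Fin n → ℂ := RCLike.ofReal ∘ hτ.eigenvalues with hf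
  have hsq : ∀ i, hτ.eigenvalues i = 0 ∨ hτ.eigenvalues i = 1 := by
    have h1 : diagonal f * diagonal f = diagonal f := by
      rw [← hdiag]
      calc (star U * τ * U) * (star U * τ * U)
          = star U * τ * (U * star U) * τ * U := by noncomm_ring
        _ = star U * (τ * τ) * U := by rw [hUU']; noncomm_ring
        _ = star U * τ * U := by rw [hidem]
    rw [diagonal_mul_diagonal] at h1
    intro i
    have h2 := congrFun (diagonal_injective h1) i
    simp only [Pi.mul_apply, hf, Function.comp_apply] at h2
    have h3 : hτ.eigenvalues i * hτ.eigenvalues i = hτ.eigenvalues i := by exact_mod_cast h2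
    have h4 : hτ.eigenvalues i * (hτ.eigenvalues i - 1) = 0 := by ring_nf; linarith [h3]
    rcases mul_eq_zero.mp h4 with h | h
    · exact Or.inl h
    · exact Or.inr (by linarith)
  have hsum : ∑ i, hτ.eigenvalues i = 1 := by
    have : τ.trace = (diagonal f).trace := by
      calc τ.trace = (U * diagonal f * star U).trace := by rw [← hspec]
        _ = (star U * U * diagonal f).trace := by rw [Matrix.trace_mul_cycle]
        _ = (diagonal f).trace := by rw [hUU, one_mul]
    rw [htr, trace_diagonal] at this
    have h5 : (∑ i, f i) = 1 := this.symm
    simp only [hf, Function.comp_apply] at h5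
    have h6 : ((∑ i, hτ.eigenvalues i : ℝ) : ℂ) = ((1:ℝ):ℂ) := by push_cast; simpa using h5
    exact Complex.ofReal_injective h6
  -- exactly one eigenvalue equals 1
  obtain ⟨i₀, hi₀⟩ : ∃ i, hτ.eigenvalues i = 1 := by
    by_contra h
    push_neg at h
    have : ∀ i, hτ.eigenvalues i = 0 := fun i => (hsq i).resolve_right (h i)
    rw [Finset.sum_congr rfl (fun i _ => this i)] at hsum
    simp at hsum
  have hzero : ∀ i, i ≠ i₀ → hτ.eigenvalues i = 0 := by
    intro i hi
    rcases hsq i with h | h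
    · exact h
    · exfalso
      have hnn : ∀ j ∈ Finset.univ.erase i₀ \ {i}, (0:ℝ) ≤ hτ.eigenvalues j := by
        intro j _
        rcases hsq j with h' | h' <;> simp [h']
      have h1 : ∑ j, hτ.eigenvalues j
          = hτ.eigenvalues i₀ + ∑ j ∈ Finset.univ.erase i₀, hτ.eigenvalues j := by
        rw [Finset.add_sum_erase _ _ (Finset.mem_univ i₀)]
      have h2 : hτ.eigenvalues i ≤ ∑ j ∈ Finset.univ.erase i₀, hτ.eigenvalues j := by
        apply Finset.single_le_sum (f := fun j => hτ.eigenvalues j)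
        · intro j _
          rcases hsq j with h' | h' <;> simp [h']
        · simp [hi]
      rw [hsum, hi₀, h] at *
      linarith [h2, h1]
  refine ⟨fun j => U j i₀, ?_⟩
  have hfval : ∀ k, f k = if k = i₀ then 1 else 0 := by
    intro k
    by_cases hk : k = i₀
    · simp [hf, hk, hi₀]
    · simp [hf, hk, hzero k hk]
  ext i j
  conv_lhs => rw [hspec]
  simp only [mul_apply, diagonal_apply, hfval, star_apply, vecMulVec_apply]
  have hcollapse : ∀ x : Fin n,
      (∑ x1 : Fin n, U i x1 * if x1 = x then if x1 = i₀ then 1 else 0 else 0)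
        = if x = i₀ then U i i₀ else 0 := by
    intro x
    rw [Finset.sum_eq_single x]
    · by_cases hx : x = i₀ <;> simp [hx]
    · intro b _ hb; simp [hb]
    · simp
  rw [Finset.sum_congr rfl (fun x _ => by rw [hcollapse x])]
  simp [Pi.star_apply]

example : True := trivial

/-- For every `n`, there is no pure-state commutator bilocal quantum model in `M_n(ℂ)`
(commuting Hermitian idempotent sources `ρ`, `σ` with `Tr(ρσ) = 1`, pairwise commuting
binary PVMs with the bilocal commutation constraints) realising the shared random bit. -/
theorem stmt8 (n : ℕ) (hn : 0 < n) :
    ¬ ∃ (ρ σ : Matrix (Fin n) (Fin n) ℂ) (A B C : Fin 2 → Matrix (Fin n) (Fin n) ℂ),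
      ρᴴ = ρ ∧ ρ * ρ = ρ ∧ σᴴ = σ ∧ σ * σ = σ ∧ ρ * σ = σ * ρ ∧ (ρ * σ).trace = 1 ∧
      (∀ a, (A a)ᴴ = A a ∧ A a * A a = A a) ∧ A 0 + A 1 = 1 ∧
      (∀ b, (B b)ᴴ = B b ∧ B b * B b = B b) ∧ B 0 + B 1 = 1 ∧
      (∀ c, (C c)ᴴ = C c ∧ C c * C c = C c) ∧ C 0 + C 1 = 1 ∧
      (∀ a b, A a * B b = B b * A a) ∧
      (∀ a c, A a * C c = C c * A a) ∧
      (∀ b c, B b * C c = C c * B b) ∧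
      (∀ a, A a * σ = σ * A a) ∧
      (∀ c, ρ * C c = C c * ρ) ∧
      (∀ a b c, (ρ * σ * (A a * B b * C c)).trace =
        if a = b ∧ b = c then (1/2 : ℂ) else 0) := by
  rintro ⟨ρ, σ, A, B, C, hρh, hρ2, hσh, hσ2, hcomm, htr, hA, hAsum, hB, hBsum, hC, hCsum,
    hAB, hAC, hBC, hAσ, hρC, hp⟩
  -- τ := ρ * σ is a Hermitian idempotent of trace 1
  have hτ2 : (ρ * σ) * (ρ * σ) = ρ * σ := by
    calc (ρ * σ) * (ρ * σ) = ρ * (σ * ρ) * σ := by noncomm_ring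
      _ = ρ * (ρ * σ) * σ := by rw [← hcomm]
      _ = (ρ * ρ) * (σ * σ) := by noncomm_ring
      _ = ρ * σ := by rw [hρ2, hσ2]
  have hτh : (ρ * σ)ᴴ = ρ * σ := by
    rw [conjTranspose_mul, hρh, hσh, ← hcomm]
  obtain ⟨v, hv⟩ := rank_one_of_proj_trace_one hτh hτ2 htr
  -- factorisation through the rank one projection
  have hfact : ∀ X Y : Matrix (Fin n) (Fin n) ℂ,
      ((ρ * σ) * X * (ρ * σ) * Y).trace = ((ρ * σ) * X).trace * ((ρ * σ) * Y).trace := by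
    intro X Y
    rw [hv]
    rw [myVecMulVec_mul, myVecMulVec_mul_vecMulVec, smul_mul_assoc, trace_smul,
      myVecMulVec_mul, myTrace_vecMulVec, myTrace_vecMulVec, smul_eq_mul]
  -- marginals
  set a := A 0
  set c := C 0
  have htrA : ((ρ * σ) * a).trace = 1/2 := by
    have e1 : (ρ * σ) * a = (ρ*σ)*(A 0*B 0*C 0) + (ρ*σ)*(A 0*B 0*C 1)
        + (ρ*σ)*(A 0*B 1*C 0) + (ρ*σ)*(A 0*B 1*C 1) := by
      have h1 : (ρ * σ) * a = (ρ * σ) * (A 0 * (B 0 + B 1) * (C 0 + C 1)) := by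
        rw [hBsum, hCsum, mul_one, mul_one]
      rw [h1]; noncomm_ring
    rw [e1, trace_add, trace_add, trace_add, hp 0 0 0, hp 0 0 1, hp 0 1 0, hp 0 1 1]
    norm_num
  have htrC : ((ρ * σ) * c).trace = 1/2 := by
    have e1 : (ρ * σ) * c = (ρ*σ)*(A 0*B 0*C 0) + (ρ*σ)*(A 0*B 1*C 0)
        + (ρ*σ)*(A 1*B 0*C 0) + (ρ*σ)*(A 1*B 1*C 0) := by
      have h1 : (ρ * σ) * c = (ρ * σ) * ((A 0 + A 1) * (B 0 + B 1) * C 0) := by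
        rw [hBsum, hAsum, one_mul, one_mul]
      rw [h1]; noncomm_ring
    rw [e1, trace_add, trace_add, trace_add, hp 0 0 0, hp 0 1 0, hp 1 0 0, hp 1 1 0]
    norm_num
  have htrAC : ((ρ * σ) * (a * c)).trace = 1/2 := by
    have e1 : (ρ * σ) * (a * c) = (ρ*σ)*(A 0*B 0*C 0) + (ρ*σ)*(A 0*B 1*C 0) := by
      have h1 : (ρ * σ) * (a * c) = (ρ * σ) * (A 0 * (B 0 + B 1) * C 0) := by
        rw [hBsum, mul_one]
      rw [h1]; noncomm_ring
    rw [e1, trace_add, hp 0 0 0, hp 0 1 0]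
    norm_num
  -- the key identity : Tr(τ a c) = Tr(τ a τ c)
  have haσ : a * σ = σ * a := hAσ 0
  have hcρ : ρ * c = c * ρ := hρC 0
  have hM : σ*a*(ρ*σ)*c*ρ = σ*(a*c)*ρ := by
    calc σ*a*(ρ*σ)*c*ρ = σ*((a*σ)*(ρ*c))*ρ := by rw [hcomm]; noncomm_ring
      _ = σ*((σ*a)*(c*ρ))*ρ := by rw [haσ, hcρ]
      _ = (σ*σ)*(a*c)*(ρ*ρ) := by noncomm_ring
      _ = σ*(a*c)*ρ := by rw [hρ2, hσ2]
  have hkey : ((ρ * σ) * (a * c)).trace = ((ρ * σ) * a * (ρ * σ) * c).trace := by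
    have t1 : (ρ * σ * (a * c)).trace = (σ*(a*c)*ρ).trace := by
      rw [mul_assoc, Matrix.trace_mul_comm]
    have t2 : (ρ * σ * a * (ρ * σ) * c).trace = (σ*a*(ρ*σ)*c*ρ).trace := by
      have h : ρ * σ * a * (ρ * σ) * c = ρ * (σ*a*(ρ*σ)*c) := by noncomm_ring
      rw [h, Matrix.trace_mul_comm]
    rw [t1, t2, hM]
  rw [htrAC, hfact a c, htrA, htrC] at hkey
  norm_num at hkey
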